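/- Let ρ ∈ (0,1], κ ∈ (0,1], and let (m_{−1}, m₁, n_{−1}, n₁) ∈ ℝ⁴ satisfy m_{−1} < m₁ and n₁ < n_{−1}. Define P₊, P₋ : [0,∞)² → ℝ by P₊(a,b) = (κ a^ρ/(a^ρ+b^ρ) + (1−κ)/2) m₁ + (κ b^ρ/(a^ρ+b^ρ) + (1−κ)/2) m_{−1} − a and P₋(a,b) = (κ b^ρ/(a^ρ+b^ρ) + (1−κ)/2) n_{−1} + (κ a^ρ/(a^ρ+b^ρ) + (1−κ)/2) n₁ − b for (a,b) ≠ (0,0), and P₊(0,0) = (m₁ + m_{−1})/2, P₋(0,0) = (n_{−1} + n₁)/2. Then there is a unique pair (a,b) ∈ [0,∞)² such that P₊(a,b) = max over a' ∈ [0,∞) of P₊(a',b) and P₋(a,b) = max over b' ∈ [0,∞) of P₋(a,b'); setting M = m₁ − m_{−1} and N = n_{−1} − n₁, this pair is (a,b) = κρ · (M^{1+ρ} N^ρ/(M^ρ+N^ρ)², M^ρ N^{1+ρ}/(M^ρ+N^ρ)²), and both of its components are strictly positive. -/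

import Mathlib

open Real Filter Set

private lemma phi_hasDeriv (c t ρ : ℝ) (ht : 0 < t) (x : ℝ) (hx : 0 < x) :
    HasDerivAt (fun y : ℝ => c * y ^ ρ / (y ^ ρ + t) - y)
      (c * ρ * x ^ (ρ - 1) * t / (x ^ ρ + t) ^ 2 - 1) x := by
  have hden : x ^ ρ + t ≠ 0 := by
    have := Real.rpow_pos_of_pos hx ρ; positivity
  have h1 : HasDerivAt (fun y : ℝ => y ^ ρ) (ρ * x ^ (ρ - 1)) x :=
    Real.hasDerivAt_rpow_const (Or.inl hx.ne')
  have hnum : HasDerivAt (fun y : ℝ => c * y ^ ρ) (c * (ρ * x ^ (ρ - 1))) x := h1.const_mul c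
  have hd : HasDerivAt (fun y : ℝ => y ^ ρ + t) (ρ * x ^ (ρ - 1)) x := h1.add_const t
  have hq := (hnum.div hd hden).sub (hasDerivAt_id x)
  refine hq.congr_deriv ?_
  ring

private lemma D_anti (c t ρ : ℝ) (hc : 0 < c) (ht : 0 < t) (hρ0 : 0 < ρ) (hρ1 : ρ ≤ 1)
    {x y : ℝ} (hx : 0 < x) (hxy : x < y) :
    c * ρ * y ^ (ρ - 1) * t / (y ^ ρ + t) ^ 2 < c * ρ * x ^ (ρ - 1) * t / (x ^ ρ + t) ^ 2 := by
  have hy : 0 < y := hx.trans hxy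
  have hxρ : 0 < x ^ ρ := Real.rpow_pos_of_pos hx ρ
  have hyρ : 0 < y ^ ρ := Real.rpow_pos_of_pos hy ρ
  have h1 : y ^ (ρ - 1) ≤ x ^ (ρ - 1) :=
    Real.rpow_le_rpow_of_nonpos hx hxy.le (by linarith)
  have h2 : x ^ ρ < y ^ ρ := Real.rpow_lt_rpow hx.le hxy hρ0
  have hx1 : 0 < x ^ (ρ - 1) := Real.rpow_pos_of_pos hx (ρ - 1)
  calc c * ρ * y ^ (ρ - 1) * t / (y ^ ρ + t) ^ 2
      ≤ c * ρ * x ^ (ρ - 1) * t / (y ^ ρ + t) ^ 2 := by gcongr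
    _ < c * ρ * x ^ (ρ - 1) * t / (x ^ ρ + t) ^ 2 := by
        have hd : (x ^ ρ + t) ^ 2 < (y ^ ρ + t) ^ 2 := by
          apply pow_lt_pow_left₀ (by linarith) (by positivity)
          norm_num
        exact div_lt_div_of_pos_left (by positivity) (by positivity) hd

private lemma phi_max (c t ρ : ℝ) (hc : 0 < c) (ht : 0 < t) (hρ0 : 0 < ρ) (hρ1 : ρ ≤ 1)
    (x₀ : ℝ) (hx₀ : 0 < x₀)
    (hFOC : c * ρ * x₀ ^ (ρ - 1) * t = (x₀ ^ ρ + t) ^ 2) :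
    ∀ x, 0 ≤ x → c * x ^ ρ / (x ^ ρ + t) - x ≤ c * x₀ ^ ρ / (x₀ ^ ρ + t) - x₀ := by
  set φ : ℝ → ℝ := fun y => c * y ^ ρ / (y ^ ρ + t) - y with hφ
  have hrc : Continuous fun y : ℝ => y ^ ρ :=
    continuous_iff_continuousAt.mpr fun y => Real.continuousAt_rpow_const y ρ (Or.inr hρ0.le)
  have hcont : ContinuousOn φ (Ici 0) := by
    apply ContinuousOn.sub _ continuousOn_id
    apply ContinuousOn.div ((continuous_const.mul hrc).continuousOn)
      ((hrc.add continuous_const).continuousOn)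
    intro y hy
    have : 0 ≤ y ^ ρ := Real.rpow_nonneg hy ρ
    exact (by linarith : (0:ℝ) < y ^ ρ + t).ne'
  have hD0 : c * ρ * x₀ ^ (ρ - 1) * t / (x₀ ^ ρ + t) ^ 2 - 1 = 0 := by
    rw [hFOC]
    have : 0 < x₀ ^ ρ := Real.rpow_pos_of_pos hx₀ ρ
    field_simp
    norm_num
  have hderiv : ∀ z : ℝ, 0 < z → deriv φ z = c * ρ * z ^ (ρ - 1) * t / (z ^ ρ + t) ^ 2 - 1 :=
    fun z hz => (phi_hasDeriv c t ρ ht z hz).deriv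
  have hmono : StrictMonoOn φ (Icc 0 x₀) := by
    apply strictMonoOn_of_deriv_pos (convex_Icc 0 x₀) (hcont.mono Icc_subset_Ici_self)
    intro z hz
    rw [interior_Icc, mem_Ioo] at hz
    rw [hderiv z hz.1]
    have := D_anti c t ρ hc ht hρ0 hρ1 hz.1 hz.2
    linarith [hD0]
  have hanti : StrictAntiOn φ (Ici x₀) := by
    apply strictAntiOn_of_deriv_neg (convex_Ici x₀) (hcont.mono (Ici_subset_Ici.mpr hx₀.le))
    intro z hz
    rw [interior_Ici, mem_Ioi] at hz
    rw [hderiv z (hx₀.trans hz)]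
    have := D_anti c t ρ hc ht hρ0 hρ1 hx₀ hz
    linarith [hD0]
  intro x hx
  rcases lt_trichotomy x x₀ with h | h | h
  · exact (hmono (mem_Icc.mpr ⟨hx, h.le⟩) (mem_Icc.mpr ⟨hx₀.le, le_refl _⟩) h).le
  · rw [h]
  · exact (hanti (mem_Ici.mpr le_rfl) (mem_Ici.mpr h.le) h).le

private lemma phi_foc (c t ρ : ℝ) (ht : 0 < t) (hρ0 : 0 < ρ)
    (x₀ : ℝ) (hx₀ : 0 < x₀)
    (hmax : ∀ x, 0 ≤ x → c * x ^ ρ / (x ^ ρ + t) - x ≤ c * x₀ ^ ρ / (x₀ ^ ρ + t) - x₀) :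
    c * ρ * x₀ ^ (ρ - 1) * t = (x₀ ^ ρ + t) ^ 2 := by
  have hloc : IsLocalMax (fun y : ℝ => c * y ^ ρ / (y ^ ρ + t) - y) x₀ := by
    filter_upwards [eventually_gt_nhds hx₀] with x hx using hmax x hx.le
  have h0 := hloc.hasDerivAt_eq_zero (phi_hasDeriv c t ρ ht x₀ hx₀)
  have hden : (x₀ ^ ρ + t) ^ 2 ≠ 0 := by
    have := Real.rpow_pos_of_pos hx₀ ρ; positivity
  field_simp at h0
  linarith [h0]

set_option maxHeartbeats 1000000 in
theorem stmt18 (κ ρ : ℝ) (hκ : κ ∈ Set.Ioc (0:ℝ) 1) (hρ : ρ ∈ Set.Ioc (0:ℝ) 1)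
    (mneg mone nneg none' : ℝ) (hm : mneg < mone) (hn : none' < nneg)
    (Pp Pm : ℝ → ℝ → ℝ)
    (hPp : ∀ a b : ℝ, ¬(a = 0 ∧ b = 0) →
      Pp a b = (κ * a ^ ρ / (a ^ ρ + b ^ ρ) + (1 - κ) / 2) * mone
        + (κ * b ^ ρ / (a ^ ρ + b ^ ρ) + (1 - κ) / 2) * mneg - a)
    (hPp0 : Pp 0 0 = (mone + mneg) / 2)
    (hPm : ∀ a b : ℝ, ¬(a = 0 ∧ b = 0) →
      Pm a b = (κ * b ^ ρ / (a ^ ρ + b ^ ρ) + (1 - κ) / 2) * nneg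
        + (κ * a ^ ρ / (a ^ ρ + b ^ ρ) + (1 - κ) / 2) * none' - b)
    (hPm0 : Pm 0 0 = (nneg + none') / 2)
    (A B : ℝ)
    (hA : A = κ * ρ * (mone - mneg) ^ (1 + ρ) * (nneg - none') ^ ρ
      / ((mone - mneg) ^ ρ + (nneg - none') ^ ρ) ^ 2)
    (hB : B = κ * ρ * (mone - mneg) ^ ρ * (nneg - none') ^ (1 + ρ)
      / ((mone - mneg) ^ ρ + (nneg - none') ^ ρ) ^ 2) :
    (0 < A ∧ 0 < B) ∧
    (∀ a' : ℝ, 0 ≤ a' → Pp a' B ≤ Pp A B) ∧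
    (∀ b' : ℝ, 0 ≤ b' → Pm A b' ≤ Pm A B) ∧
    ∀ a b : ℝ, 0 ≤ a → 0 ≤ b →
      (∀ a' : ℝ, 0 ≤ a' → Pp a' b ≤ Pp a b) →
      (∀ b' : ℝ, 0 ≤ b' → Pm a b' ≤ Pm a b) →
      a = A ∧ b = B := by
  obtain ⟨hκ0, hκ1⟩ := hκ
  obtain ⟨hρ0, hρ1⟩ := hρ
  obtain ⟨M, hMdef⟩ : ∃ x : ℝ, x = mone - mneg := ⟨_, rfl⟩
  obtain ⟨N, hNdef⟩ : ∃ x : ℝ, x = nneg - none' := ⟨_, rfl⟩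
  have hM : (0:ℝ) < M := by rw [hMdef]; linarith
  have hN : (0:ℝ) < N := by rw [hNdef]; linarith
  rw [← hMdef, ← hNdef] at hA hB
  have hu : 0 < M ^ ρ := Real.rpow_pos_of_pos hM ρ
  have hv : 0 < N ^ ρ := Real.rpow_pos_of_pos hN ρ
  have huv : 0 < M ^ ρ + N ^ ρ := by linarith
  have hA' : A = κ * ρ * M * M ^ ρ * N ^ ρ / (M ^ ρ + N ^ ρ) ^ 2 := by
    rw [hA, Real.rpow_add hM, Real.rpow_one]; ring
  have hB' : B = κ * ρ * N * M ^ ρ * N ^ ρ / (M ^ ρ + N ^ ρ) ^ 2 := by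
    rw [hB, Real.rpow_add hN, Real.rpow_one]; ring
  have hApos : 0 < A := by
    rw [hA']
    exact div_pos (mul_pos (mul_pos (mul_pos (mul_pos hκ0 hρ0) hM) hu) hv) (pow_pos huv 2)
  have hBpos : 0 < B := by
    rw [hB']
    exact div_pos (mul_pos (mul_pos (mul_pos (mul_pos hκ0 hρ0) hN) hu) hv) (pow_pos huv 2)
  have hAρ : 0 < A ^ ρ := Real.rpow_pos_of_pos hApos ρ
  have hBρ : 0 < B ^ ρ := Real.rpow_pos_of_pos hBpos ρ
  have hBArel : B = N / M * A := by rw [hA', hB']; field_simp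
  have hβ : B ^ ρ = N ^ ρ / M ^ ρ * A ^ ρ := by
    rw [hBArel, Real.mul_rpow (by positivity) hApos.le, Real.div_rpow hN.le hM.le]
  have hFOC1 : κ * M * ρ * A ^ (ρ - 1) * B ^ ρ = (A ^ ρ + B ^ ρ) ^ 2 := by
    rw [Real.rpow_sub hApos, Real.rpow_one, hβ]
    generalize A ^ ρ = α
    rw [hA']
    field_simp
  have hFOC2 : κ * N * ρ * B ^ (ρ - 1) * A ^ ρ = (B ^ ρ + A ^ ρ) ^ 2 := by
    rw [Real.rpow_sub hBpos, Real.rpow_one, hβ]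
    generalize A ^ ρ = α
    rw [hB']
    field_simp
    ring
  have key1 : ∀ x, 0 ≤ x → Pp x B = κ * M * x ^ ρ / (x ^ ρ + B ^ ρ)
      + (κ * mneg + (1 - κ) * (mone + mneg) / 2) - x := by
    intro x hx
    have hxρ : 0 ≤ x ^ ρ := Real.rpow_nonneg hx ρ
    have hS : x ^ ρ + B ^ ρ ≠ 0 := by linarith
    rw [hPp x B (by rintro ⟨-, h⟩; exact hBpos.ne' h), hMdef]
    field_simp
    ring
  have key2 : ∀ y, 0 ≤ y → Pm A y = κ * N * y ^ ρ / (y ^ ρ + A ^ ρ)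
      + (κ * none' + (1 - κ) * (nneg + none') / 2) - y := by
    intro y hy
    have hyρ : 0 ≤ y ^ ρ := Real.rpow_nonneg hy ρ
    have hS : A ^ ρ + y ^ ρ ≠ 0 := by linarith
    have hS' : y ^ ρ + A ^ ρ ≠ 0 := by linarith
    rw [hPm A y (by rintro ⟨h, -⟩; exact hApos.ne' h), hNdef]
    field_simp
    ring
  refine ⟨⟨hApos, hBpos⟩, ?_, ?_, ?_⟩
  · intro a' ha'
    rw [key1 a' ha', key1 A hApos.le]
    have := phi_max (κ * M) (B ^ ρ) ρ (mul_pos hκ0 hM) hBρ hρ0 hρ1 A hApos hFOC1 a' ha'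
    linarith
  · intro b' hb'
    rw [key2 b' hb', key2 B hBpos.le]
    have := phi_max (κ * N) (A ^ ρ) ρ (mul_pos hκ0 hN) hAρ hρ0 hρ1 B hBpos hFOC2 b' hb'
    linarith
  · intro a b ha hb h1 h2
    have hbne : b ≠ 0 := by
      intro hb0
      rcases eq_or_lt_of_le ha with ha0 | ha0
      · have hx : (0:ℝ) < κ * N / 4 := div_pos (mul_pos hκ0 hN) (by norm_num)
        have e : Pm a (κ * N / 4) = κ * nneg + (1 - κ) / 2 * nneg + (1 - κ) / 2 * none'
            - κ * N / 4 := by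
          rw [← ha0, hPm 0 (κ * N / 4) (by rintro ⟨-, h⟩; exact hx.ne' h),
            Real.zero_rpow hρ0.ne']
          have : (κ * N / 4) ^ ρ ≠ 0 := (Real.rpow_pos_of_pos hx ρ).ne'
          field_simp
          ring
        have h2' := h2 (κ * N / 4) hx.le
        rw [e, ← ha0, hb0, hPm0] at h2'
        have hkey : κ * N = κ * nneg - κ * none' := by rw [hNdef]; ring
        linarith [mul_pos hκ0 hN]
      · have h1' := h1 (a / 2) (by linarith)
        have haρ : a ^ ρ ≠ 0 := (Real.rpow_pos_of_pos ha0 ρ).ne'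
        have ha2ρ : (a / 2) ^ ρ ≠ 0 := (Real.rpow_pos_of_pos (by linarith) ρ).ne'
        have e1 : Pp a b = κ * mone + (1 - κ) / 2 * mone + (1 - κ) / 2 * mneg - a := by
          rw [hb0, hPp a 0 (by rintro ⟨h, -⟩; exact ha0.ne' h), Real.zero_rpow hρ0.ne']
          field_simp
          ring
        have e2 : Pp (a / 2) b = κ * mone + (1 - κ) / 2 * mone + (1 - κ) / 2 * mneg
            - a / 2 := by
          rw [hb0, hPp (a / 2) 0 (by rintro ⟨h, -⟩; exact (by linarith : (0:ℝ) < a / 2).ne' h),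
            Real.zero_rpow hρ0.ne']
          field_simp
          ring
        rw [e1, e2] at h1'
        linarith
    have hane : a ≠ 0 := by
      intro ha0
      rcases eq_or_lt_of_le hb with hb0 | hb0
      · have hx : (0:ℝ) < κ * M / 4 := div_pos (mul_pos hκ0 hM) (by norm_num)
        have e : Pp (κ * M / 4) b = κ * mone + (1 - κ) / 2 * mone + (1 - κ) / 2 * mneg
            - κ * M / 4 := by
          rw [← hb0, hPp (κ * M / 4) 0 (by rintro ⟨h, -⟩; exact hx.ne' h),
            Real.zero_rpow hρ0.ne']
          have : (κ * M / 4) ^ ρ ≠ 0 := (Real.rpow_pos_of_pos hx ρ).ne'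
          field_simp
          ring
        have h1' := h1 (κ * M / 4) hx.le
        rw [e, ha0, ← hb0, hPp0] at h1'
        have hkey : κ * M = κ * mone - κ * mneg := by rw [hMdef]; ring
        linarith [mul_pos hκ0 hM]
      · have h2' := h2 (b / 2) (by linarith)
        have hbρ : b ^ ρ ≠ 0 := (Real.rpow_pos_of_pos hb0 ρ).ne'
        have hb2ρ : (b / 2) ^ ρ ≠ 0 := (Real.rpow_pos_of_pos (by linarith) ρ).ne'
        have e1 : Pm a b = κ * nneg + (1 - κ) / 2 * nneg + (1 - κ) / 2 * none' - b := by
          rw [ha0, hPm 0 b (by rintro ⟨-, h⟩; exact hb0.ne' h), Real.zero_rpow hρ0.ne']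
          field_simp
          ring
        have e2 : Pm a (b / 2) = κ * nneg + (1 - κ) / 2 * nneg + (1 - κ) / 2 * none'
            - b / 2 := by
          rw [ha0, hPm 0 (b / 2) (by rintro ⟨-, h⟩; exact (by linarith : (0:ℝ) < b / 2).ne' h),
            Real.zero_rpow hρ0.ne']
          field_simp
          ring
        rw [e1, e2] at h2'
        linarith
    have hapos : 0 < a := ha.lt_of_ne (Ne.symm hane)
    have hbpos : 0 < b := hb.lt_of_ne (Ne.symm hbne)
    have haρ : 0 < a ^ ρ := Real.rpow_pos_of_pos hapos ρ
    have hbρ' : 0 < b ^ ρ := Real.rpow_pos_of_pos hbpos ρ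
    have keyA : ∀ x, 0 ≤ x → Pp x b = κ * M * x ^ ρ / (x ^ ρ + b ^ ρ)
        + (κ * mneg + (1 - κ) * (mone + mneg) / 2) - x := by
      intro x hx
      have hxρ : 0 ≤ x ^ ρ := Real.rpow_nonneg hx ρ
      have hS : x ^ ρ + b ^ ρ ≠ 0 := by linarith
      rw [hPp x b (by rintro ⟨-, h⟩; exact hbpos.ne' h), hMdef]
      field_simp
      ring
    have keyB : ∀ y, 0 ≤ y → Pm a y = κ * N * y ^ ρ / (y ^ ρ + a ^ ρ)
        + (κ * none' + (1 - κ) * (nneg + none') / 2) - y := by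
      intro y hy
      have hyρ : 0 ≤ y ^ ρ := Real.rpow_nonneg hy ρ
      have hS : a ^ ρ + y ^ ρ ≠ 0 := by linarith
      have hS' : y ^ ρ + a ^ ρ ≠ 0 := by linarith
      rw [hPm a y (by rintro ⟨h, -⟩; exact hapos.ne' h), hNdef]
      field_simp
      ring
    have hf1 : κ * M * ρ * a ^ (ρ - 1) * b ^ ρ = (a ^ ρ + b ^ ρ) ^ 2 := by
      apply phi_foc (κ * M) (b ^ ρ) ρ hbρ' hρ0 a hapos
      intro x hx
      have := h1 x hx
      rw [keyA x hx, keyA a ha] at this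
      linarith
    have hf2 : κ * N * ρ * b ^ (ρ - 1) * a ^ ρ = (b ^ ρ + a ^ ρ) ^ 2 := by
      apply phi_foc (κ * N) (a ^ ρ) ρ haρ hρ0 b hbpos
      intro y hy
      have := h2 y hy
      rw [keyB y hy, keyB b hb] at this
      linarith
    rw [Real.rpow_sub hapos, Real.rpow_one] at hf1
    rw [Real.rpow_sub hbpos, Real.rpow_one] at hf2
    have hS2 : ((a ^ ρ + b ^ ρ) ^ 2 : ℝ) ≠ 0 := (pow_pos (by linarith) 2).ne'
    field_simp [hapos.ne'] at hf1
    field_simp [hbpos.ne'] at hf2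
    obtain ⟨k, hkdef⟩ : ∃ x : ℝ, x = κ * ρ * a ^ ρ * b ^ ρ / (a ^ ρ + b ^ ρ) ^ 2 := ⟨_, rfl⟩
    have hk : 0 < k := by
      rw [hkdef]
      exact div_pos (mul_pos (mul_pos (mul_pos hκ0 hρ0) haρ) hbρ') (pow_pos (by linarith) 2)
    have hak : a = k * M := by
      rw [hkdef, div_mul_eq_mul_div, eq_div_iff hS2]
      linear_combination -hf1
    have hbk : b = k * N := by
      rw [hkdef, div_mul_eq_mul_div, eq_div_iff hS2]
      linear_combination -hf2
    have hαk : a ^ ρ = k ^ ρ * M ^ ρ := by rw [hak, Real.mul_rpow hk.le hM.le]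
    have hβk : b ^ ρ = k ^ ρ * N ^ ρ := by rw [hbk, Real.mul_rpow hk.le hN.le]
    have hkρ : 0 < k ^ ρ := Real.rpow_pos_of_pos hk ρ
    have hcan : k * (M ^ ρ + N ^ ρ) ^ 2 = κ * ρ * (M ^ ρ * N ^ ρ) := by
      have hne : M * (k ^ ρ) ^ 2 ≠ 0 := mul_ne_zero hM.ne' (pow_ne_zero 2 hkρ.ne')
      apply mul_right_cancel₀ hne
      have hf1' := hf1
      rw [hαk, hβk, hak] at hf1'
      linear_combination -hf1'
    have hkval : k = κ * ρ * (M ^ ρ * N ^ ρ) / (M ^ ρ + N ^ ρ) ^ 2 := by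
      rw [eq_div_iff (pow_ne_zero 2 huv.ne')]
      linear_combination hcan
    constructor
    · rw [hak, hkval, hA']; ring
    · rw [hbk, hkval, hB']; ring
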